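/- If the sectional K-curvature is negative for every 2-plane of V and J is a skew-symmetric endomorphism of V with J·K = 0 (J acting as a derivation), then J = 0. -/

import Mathlib

open RealInnerProductSpace

/-- If the sectional K-curvature is negative for every 2-plane and `J` is a
skew-symmetric endomorphism with `J·K = 0` (as a derivation), then `J = 0`. -/
theorem derivation_of_negative_curvature_vanishes
    {V : Type*} [NormedAddCommGroup V] [InnerProductSpace ℝ V]
    [FiniteDimensional ℝ V]
    (K : V →ₗ[ℝ] V →ₗ[ℝ] V)
    (hsymm : ∀ X Y : V, K X Y = K Y X)
    (hadj : ∀ X Y Z : V, ⟪K X Y, Z⟫ = ⟪Y, K X Z⟫)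
    (hneg : ∀ X Y : V, ‖X‖ = 1 → ‖Y‖ = 1 → ⟪X, Y⟫ = 0 →
      ⟪K X X, K Y Y⟫ - ⟪K X Y, K X Y⟫ < 0)
    (J : V →ₗ[ℝ] V)
    (hJskew : ∀ X Y : V, ⟪J X, Y⟫ = -⟪X, J Y⟫)
    (hJK : ∀ X Y : V, J (K X Y) = K (J X) Y + K X (J Y)) :
    J = 0 := by
  by_contra hJ
  -- obtain a vector not killed by `J`
  obtain ⟨v₀, hv₀⟩ : ∃ v : V, J v ≠ 0 := by
    by_contra h
    push_neg at h
    exact hJ (LinearMap.ext fun v => by simp [h v])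
  have hv₀' : v₀ ≠ 0 := fun h => hv₀ (by simp [h])
  -- the symmetric operator `S = -J²`
  set S : V →L[ℝ] V := LinearMap.toContinuousLinearMap (-(J ∘ₗ J)) with hS
  have hSapp : ∀ v : V, S v = -(J (J v)) := fun v => by
    simp [hS, LinearMap.coe_toContinuousLinearMap']
  have hSinner : ∀ v : V, ⟪S v, v⟫ = ⟪J v, J v⟫ := by
    intro v
    rw [hSapp, inner_neg_left, hJskew (J v) v, neg_neg]
  have hSsymm : (S : V →ₗ[ℝ] V).IsSymmetric := by
    intro x y
    have h1 : ⟪S x, y⟫ = ⟪J x, J y⟫ := by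
      rw [hSapp, inner_neg_left, hJskew (J x) y, neg_neg]
    rw [ContinuousLinearMap.coe_coe, h1, hJskew, hSapp, inner_neg_right]
  have hSsa : IsSelfAdjoint S :=
    (ContinuousLinearMap.isSelfAdjoint_iff_isSymmetric).2 hSsymm
  -- maximize the Rayleigh quotient on the unit sphere
  have hcompact : IsCompact (Metric.sphere (0 : V) 1) := isCompact_sphere 0 1
  have hne : (Metric.sphere (0 : V) 1).Nonempty := by
    refine ⟨‖v₀‖⁻¹ • v₀, ?_⟩
    rw [mem_sphere_zero_iff_norm, norm_smul, norm_inv, norm_norm,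
      inv_mul_cancel₀ (norm_ne_zero_iff.2 hv₀')]
  obtain ⟨X, hXmem, hXmax⟩ :=
    hcompact.exists_isMaxOn hne S.reApplyInnerSelf_continuous.continuousOn
  have hXnorm : ‖X‖ = 1 := mem_sphere_zero_iff_norm.1 hXmem
  have hXmax' : IsMaxOn S.reApplyInnerSelf (Metric.sphere (0 : V) ‖X‖) X := by
    rwa [hXnorm]
  -- the eigenvector equation
  have heig := hSsa.eq_smul_self_of_isLocalExtrOn_real (IsExtrOn.localize (Or.inr hXmax'))
  set μ : ℝ := S.rayleighQuotient X with hμdef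
  have hre : ∀ v : V, S.reApplyInnerSelf v = ⟪J v, J v⟫ := by
    intro v
    rw [ContinuousLinearMap.reApplyInnerSelf_apply, ← hSinner v]
    rfl
  have hμval : μ = ⟪J X, J X⟫ := by
    rw [hμdef, ContinuousLinearMap.rayleighQuotient, hXnorm, hre]
    norm_num
  -- the quantitative maximality bound
  have hbound : ∀ v : V, ⟪J v, J v⟫ ≤ μ * ⟪v, v⟫ := by
    intro v
    rcases eq_or_ne v 0 with rfl | hv
    · simp
    · have hu : ‖v‖⁻¹ • v ∈ Metric.sphere (0 : V) 1 := by
        rw [mem_sphere_zero_iff_norm, norm_smul, norm_inv, norm_norm,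
          inv_mul_cancel₀ (norm_ne_zero_iff.2 hv)]
      have h1 : S.reApplyInnerSelf (‖v‖⁻¹ • v) ≤ S.reApplyInnerSelf X := hXmax hu
      have h2 : S.reApplyInnerSelf X = μ := by rw [hre, hμval]
      rw [hre, map_smul, real_inner_smul_left, real_inner_smul_right, h2] at h1
      have hn : (0:ℝ) < ‖v‖ := norm_pos_iff.2 hv
      have hvv : ⟪v, v⟫ = ‖v‖ ^ 2 := real_inner_self_eq_norm_sq v
      calc ⟪J v, J v⟫ = ‖v‖ ^ 2 * (‖v‖⁻¹ * (‖v‖⁻¹ * ⟪J v, J v⟫)) := by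
            field_simp
        _ ≤ ‖v‖ ^ 2 * μ := mul_le_mul_of_nonneg_left h1 (by positivity)
        _ = μ * ⟪v, v⟫ := by rw [hvv]; ring
  have hμpos : (0:ℝ) < μ := by
    have hJX2 : (0:ℝ) < ⟪J v₀, J v₀⟫ := by
      rcases lt_or_eq_of_le (real_inner_self_nonneg (x := J v₀)) with h | h
      · exact h
      · exact absurd (real_inner_self_nonpos.1 h.symm.le) hv₀
    have hu : ‖v₀‖⁻¹ • v₀ ∈ Metric.sphere (0 : V) 1 := by
      rw [mem_sphere_zero_iff_norm, norm_smul, norm_inv, norm_norm,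
        inv_mul_cancel₀ (norm_ne_zero_iff.2 hv₀')]
    have h1 : S.reApplyInnerSelf (‖v₀‖⁻¹ • v₀) ≤ S.reApplyInnerSelf X := hXmax hu
    have h2 : S.reApplyInnerSelf X = μ := by rw [hre, hμval]
    rw [hre, map_smul, real_inner_smul_left, real_inner_smul_right, h2] at h1
    have hn : (0:ℝ) < ‖v₀‖ := norm_pos_iff.2 hv₀'
    have hn' : (0:ℝ) < ‖v₀‖⁻¹ := by positivity
    nlinarith [mul_pos (mul_pos hn' hn') hJX2]
  set lam : ℝ := Real.sqrt μ with hlam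
  have hlampos : 0 < lam := Real.sqrt_pos.2 hμpos
  have hlamsq : lam * lam = μ := Real.mul_self_sqrt hμpos.le
  -- `X` is an eigenvector of `-J²`
  have hJJX : J (J X) = -(μ • X) := by
    have h2 : -(J (J X)) = μ • X := (hSapp X).symm.trans heig
    rw [← h2, neg_neg]
  -- build the orthonormal pair `X, Y` with `J X = lam • Y`, `J Y = (-lam) • X`
  obtain ⟨Y, hY⟩ : ∃ y : V, y = lam⁻¹ • J X := ⟨_, rfl⟩
  have hJXY : J X = lam • Y := by
    rw [hY, smul_smul, mul_inv_cancel₀ hlampos.ne', one_smul]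
  have hJY : J Y = (-lam) • X := by
    rw [hY, map_smul, hJJX, smul_neg, smul_smul, neg_smul]
    congr 2
    rw [← hlamsq]
    field_simp
  have hYY : ⟪Y, Y⟫ = 1 := by
    rw [hY, real_inner_smul_left, real_inner_smul_right, ← hμval, ← hlamsq]
    field_simp
  have hYnorm : ‖Y‖ = 1 := by
    have h := real_inner_self_eq_norm_sq Y
    rw [hYY] at h
    nlinarith [norm_nonneg Y]
  have hXY : ⟪X, Y⟫ = 0 := by
    have h1 := hJskew X X
    have h2 := real_inner_comm X (J X)
    have h3 : ⟪X, J X⟫ = 0 := by linarith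
    rw [hY, real_inner_smul_right, h3, mul_zero]
  -- helper for bilinearity in the first argument
  have hKl : ∀ (c : ℝ) (u w : V), K (c • u) w = c • K u w := fun c u w => by
    rw [map_smul, LinearMap.smul_apply]
  -- the derivation identities
  have hJA : J (K X X) = (2 * lam) • K X Y := by
    have e := hJK X X
    rw [hJXY] at e
    rw [e, hKl, map_smul, hsymm Y X]
    module
  have hJC : J (K Y Y) = -((2 * lam) • K X Y) := by
    have e := hJK Y Y
    rw [hJY] at e
    rw [e, hKl, map_smul, hsymm X Y]
    module
  have hJB : J (K X Y) = lam • K Y Y - lam • K X X := by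
    have e := hJK X Y
    rw [hJXY, hJY] at e
    rw [e, hKl, map_smul]
    module
  have hJD : J (K X X - K Y Y) = (4 * lam) • K X Y := by
    rw [map_sub, hJA, hJC]
    module
  have hJJD : J (J (K X X - K Y Y)) = -((4 * (lam * lam)) • (K X X - K Y Y)) := by
    rw [hJD, map_smul, hJB]
    module
  -- compute ⟪J D, J D⟫ in two ways
  set D : V := K X X - K Y Y with hD
  have e1 : ⟪J D, J D⟫ = (4 * lam) * ((4 * lam) * ⟪K X Y, K X Y⟫) := by
    rw [hD, hJD, real_inner_smul_left, real_inner_smul_right]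
  have e2 : ⟪J D, J D⟫ = (4 * (lam * lam)) * ⟪D, D⟫ := by
    rw [hJskew D (J D), hD, hJJD, inner_neg_right, real_inner_smul_right, neg_neg]
  -- maximality forces D = 0
  have hD0 : D = 0 := by
    have hb := hbound D
    rw [e2, ← hlamsq] at hb
    have hDD : ⟪D, D⟫ ≤ 0 := by
      by_contra hpos
      push_neg at hpos
      have h1 : (0:ℝ) < 3 * (lam * lam) * ⟪D, D⟫ := by positivity
      linarith
    exact real_inner_self_nonpos.1 hDD
  have hB0 : K X Y = 0 := by
    have h0 : (4 * lam) * ((4 * lam) * ⟪K X Y, K X Y⟫) = 0 := by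
      rw [← e1, hD0, map_zero, inner_zero_left]
    have hBB : ⟪K X Y, K X Y⟫ ≤ 0 := by
      by_contra hpos
      push_neg at hpos
      have h1 : (0:ℝ) < (4 * lam) * ((4 * lam) * ⟪K X Y, K X Y⟫) := by positivity
      linarith
    exact real_inner_self_nonpos.1 hBB
  have hCA : K Y Y = K X X := by
    have h := hD0
    rw [hD, sub_eq_zero] at h
    exact h.symm
  -- contradiction with negative curvature
  have hcurv := hneg X Y hXnorm hYnorm hXY
  rw [hCA, hB0] at hcurv
  simp only [inner_zero_left, sub_zero] at hcurv
  exact absurd hcurv (not_lt.2 real_inner_self_nonneg)
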